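/- Let K be a field, let F ∈ K[x]^{m×n} have rank r, let s ∈ ℤ^m, and let Kb ∈ K[x]^{(m−r)×m} be an s-weak Popov basis of the left kernel Ker(F). Let π be the set of s-pivot indices of the rows of Kb and let π^c = {1,…,m} \ π. Then π^c has exactly r elements and the row submatrix F[π^c,:] ∈ K[x]^{r×n} has rank r. -/

import Mathlib

open Polynomial Matrix

set_option synthInstance.maxHeartbeats 1000000
set_option maxHeartbeats 1000000

noncomputable section

variable {K : Type*} [Field K]

/-- Degree of a univariate polynomial, viewed in `ℤ ∪ {⊥}`. -/
def pdegZ (p : K[X]) : WithBot ℤ := p.degree.map (Nat.cast : ℕ → ℤ)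

/-- Shifted degree (`s`-degree) of a row vector. -/
def sdeg {n : ℕ} (s : Fin n → ℤ) (p : Fin n → K[X]) : WithBot ℤ :=
  Finset.univ.sup fun j => pdegZ (p j) + (s j : WithBot ℤ)

/-- `s`-leading matrix of `P`. -/
def leadMat {m n : ℕ} (s : Fin n → ℤ) (P : Matrix (Fin m) (Fin n) K[X]) :
    Matrix (Fin m) (Fin n) K :=
  Matrix.of fun i j =>
    if pdegZ (P i j) + (s j : WithBot ℤ) = sdeg s (P i) then (P i j).leadingCoeff else 0

/-- `P` is `s`-reduced: its `s`-leading matrix has full row rank. -/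
def IsShiftReduced {m n : ℕ} (s : Fin n → ℤ) (P : Matrix (Fin m) (Fin n) K[X]) : Prop :=
  (leadMat s P).rank = m

/-- `j` is the `s`-pivot index of the row `p`: the largest index where the `s`-degree is attained. -/
def IsPivotIndex {n : ℕ} (s : Fin n → ℤ) (p : Fin n → K[X]) (j : Fin n) : Prop :=
  pdegZ (p j) + (s j : WithBot ℤ) = sdeg s p ∧
  ∀ j', j < j' → pdegZ (p j') + (s j' : WithBot ℤ) ≠ sdeg s p

/-- `P` is in `s`-weak Popov form: no zero row and strictly increasing `s`-pivot indices. -/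
def IsWeakPopov {m n : ℕ} (s : Fin n → ℤ) (P : Matrix (Fin m) (Fin n) K[X]) : Prop :=
  (∀ i, P i ≠ 0) ∧ ∃ piv : Fin m → Fin n, StrictMono piv ∧ ∀ i, IsPivotIndex s (P i) (piv i)

/-- The rows of `Kb` form a basis of the left kernel of `F`. -/
def IsKernelBasis {ℓ m : ℕ} {β : Type*} [Fintype β]
    (Kb : Matrix (Fin ℓ) (Fin m) K[X]) (F : Matrix (Fin m) β K[X]) : Prop :=
  (∀ i, Kb i ᵥ* F = 0) ∧
  LinearIndependent K[X] (fun i : Fin ℓ => Kb i) ∧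
  ∀ p : Fin m → K[X], p ᵥ* F = 0 → ∃ u : Fin ℓ → K[X], p = u ᵥ* Kb

/-- Membership in the relation module `Rel_M(F)`. -/
def InRelModule {m n : ℕ} (M : Matrix (Fin n) (Fin n) K[X])
    (F : Matrix (Fin m) (Fin n) K[X]) (p : Fin m → K[X]) : Prop :=
  ∃ q : Fin n → K[X], p ᵥ* F = q ᵥ* M

/-- The rows of `A` form a basis of the relation module `Rel_M(F)`. -/
def IsRelationBasis {ℓ m n : ℕ} (M : Matrix (Fin n) (Fin n) K[X])
    (A : Matrix (Fin ℓ) (Fin m) K[X]) (F : Matrix (Fin m) (Fin n) K[X]) : Prop :=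
  (∀ i, InRelModule M F (A i)) ∧
  LinearIndependent K[X] (fun i : Fin ℓ => A i) ∧
  ∀ p : Fin m → K[X], InRelModule M F p → ∃ u : Fin ℓ → K[X], p = u ᵥ* A

/-- Rank of a polynomial matrix: its rank over the fraction field `K(x)`. -/
def polyRank {α β : Type*} [Fintype β] (F : Matrix α β K[X]) : ℕ :=
  (F.map (algebraMap K[X] (RatFunc K))).rank

/-- Lexicographic comparison of tuples. -/
def lexLE {r n : ℕ} (a b : Fin r → Fin n) : Prop :=
  ∀ i, (∀ k, k < i → a k = b k) → a i ≤ b i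

/-- `j` lists the column rank profile of `F`: the lexicographically smallest strictly
increasing tuple of `rank F` column indices selecting columns of full rank. -/
def IsColRankProfile {α : Type*} {n r : ℕ} (F : Matrix α (Fin n) K[X])
    (j : Fin r → Fin n) : Prop :=
  StrictMono j ∧ polyRank F = r ∧ polyRank (F.submatrix id j) = r ∧
  ∀ j' : Fin r → Fin n, StrictMono j' → polyRank (F.submatrix id j') = r → lexLE j j'

/-! ### Auxiliary lemmas -/

lemma pdegZ_eq_bot {p : K[X]} : pdegZ p = ⊥ ↔ p = 0 := by
  rw [pdegZ, WithBot.map_eq_bot_iff, degree_eq_bot]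

lemma pdegZ_zero : pdegZ (0 : K[X]) = ⊥ := pdegZ_eq_bot.2 rfl

lemma pdegZ_neg (p : K[X]) : pdegZ (-p) = pdegZ p := by rw [pdegZ, degree_neg, pdegZ]

lemma pdegZ_mul (p q : K[X]) : pdegZ (p * q) = pdegZ p + pdegZ q := by
  unfold pdegZ
  rw [degree_mul]
  cases hp : p.degree with
  | bot => simp
  | coe a => cases hq : q.degree with
    | bot => simp
    | coe b => simp [← WithBot.coe_add]

lemma mapZ_sup (a b : WithBot ℕ) :
    (a ⊔ b).map (Nat.cast : ℕ → ℤ) = a.map (Nat.cast : ℕ → ℤ) ⊔ b.map (Nat.cast : ℕ → ℤ) := by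
  cases a with
  | bot => simp
  | coe a => cases b with
    | bot => simp
    | coe b =>
      rw [← WithBot.coe_sup, WithBot.map_coe, WithBot.map_coe, WithBot.map_coe, ← WithBot.coe_sup]
      norm_cast

lemma pdegZ_sum_le {ι : Type*} (t : Finset ι) (f : ι → K[X]) :
    pdegZ (∑ i ∈ t, f i) ≤ t.sup fun i => pdegZ (f i) := by
  have h := Polynomial.degree_sum_le t f
  have h2 := (Nat.mono_cast (α := ℤ)).withBot_map h
  rw [Finset.comp_sup_eq_sup_comp (WithBot.map (Nat.cast : ℕ → ℤ)) (fun x y => mapZ_sup x y)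
    (by simp)] at h2
  exact h2

lemma sdeg_ne_bot {n : ℕ} (s : Fin n → ℤ) {p : Fin n → K[X]} (hp : p ≠ 0) :
    sdeg s p ≠ ⊥ := by
  obtain ⟨j, hj⟩ : ∃ j, p j ≠ 0 := by
    by_contra h
    push_neg at h
    exact hp (funext h)
  intro hbot
  have hle := Finset.le_sup (f := fun j => pdegZ (p j) + (s j : WithBot ℤ))
    (Finset.mem_univ j)
  rw [sdeg] at hbot
  rw [hbot, le_bot_iff, WithBot.add_eq_bot] at hle
  rcases hle with h | h
  · exact hj (pdegZ_eq_bot.1 h)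
  · exact WithBot.coe_ne_bot h

/-- Core pivot argument: if `u ᵥ* Kb` vanishes on all pivot columns of a weak-Popov
matrix `Kb`, then `u = 0`. -/
lemma vecMul_pivot_zero {ℓ m : ℕ} (s : Fin m → ℤ) (Kb : Matrix (Fin ℓ) (Fin m) K[X])
    (piv : Fin ℓ → Fin m) (hmono : StrictMono piv) (hnz : ∀ i, Kb i ≠ 0)
    (hpiv : ∀ i, IsPivotIndex s (Kb i) (piv i))
    (u : Fin ℓ → K[X]) (hu0 : ∀ i, (u ᵥ* Kb) (piv i) = 0) : u = 0 := by
  classical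
  by_contra hu
  obtain ⟨i1, hi1⟩ : ∃ i, u i ≠ 0 := by
    by_contra h; push_neg at h; exact hu (funext h)
  set Dfun : Fin ℓ → WithBot ℤ := fun i => pdegZ (u i) + sdeg s (Kb i) with hDfun
  set S : Finset (Fin ℓ) := Finset.univ.filter (fun i => u i ≠ 0) with hS
  have hSne : S.Nonempty := ⟨i1, by simp [hS, hi1]⟩
  set D : WithBot ℤ := S.sup Dfun with hD
  obtain ⟨i0, hi0S, hi0⟩ := Finset.exists_mem_eq_sup S hSne Dfun
  set M : Finset (Fin ℓ) := S.filter (fun i => Dfun i = D) with hM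
  have hMne : M.Nonempty := ⟨i0, by simp [hM, hi0S, hi0.symm, hD]⟩
  set istar : Fin ℓ := M.max' hMne with histar
  have histarM : istar ∈ M := M.max'_mem hMne
  have histarS : istar ∈ S := (Finset.mem_filter.1 histarM).1
  have hustar : u istar ≠ 0 := (Finset.mem_filter.1 histarS).2
  have hDstar : Dfun istar = D := (Finset.mem_filter.1 histarM).2
  set c : WithBot ℤ := ((s (piv istar) : ℤ) : WithBot ℤ) with hc
  have hcne : c ≠ ⊥ := WithBot.coe_ne_bot
  set a : K[X] := Kb istar (piv istar) with ha
  have hpivstar := hpiv istar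
  have hsig : pdegZ a + c = sdeg s (Kb istar) := hpivstar.1
  have hsigne : sdeg s (Kb istar) ≠ ⊥ := sdeg_ne_bot s (hnz istar)
  have hane : a ≠ 0 := by
    intro h0
    rw [h0] at hsig
    rw [pdegZ_zero, WithBot.bot_add] at hsig
    exact hsigne hsig.symm
  have hDmainne : pdegZ (u istar * a) ≠ ⊥ := by
    rw [pdegZ_mul, Ne, WithBot.add_eq_bot]
    push_neg
    exact ⟨fun h => hustar (pdegZ_eq_bot.1 h), fun h => hane (pdegZ_eq_bot.1 h)⟩
  have hDmainc : pdegZ (u istar * a) + c = D := by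
    rw [pdegZ_mul, add_assoc, hsig]
    exact hDstar
  have hsmall : ∀ i ∈ Finset.univ.erase istar,
      pdegZ (u i * Kb i (piv istar)) < pdegZ (u istar * a) := by
    intro i hi
    have hine : i ≠ istar := (Finset.mem_erase.1 hi).1
    by_cases hui : u i = 0
    · rw [hui, zero_mul, pdegZ_zero]
      exact Ne.bot_lt hDmainne
    · have hiS : i ∈ S := by simp [hS, hui]
      have hentry_le : pdegZ (Kb i (piv istar)) + ((s (piv istar) : ℤ) : WithBot ℤ)
          ≤ sdeg s (Kb i) :=
        Finset.le_sup (f := fun j => pdegZ (Kb i j) + (s j : WithBot ℤ)) (Finset.mem_univ _)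
      have hterm : pdegZ (u i * Kb i (piv istar)) + c
          = pdegZ (u i) + (pdegZ (Kb i (piv istar)) + c) := by
        rw [pdegZ_mul, add_assoc]
      have hlt : pdegZ (u i * Kb i (piv istar)) + c < D := by
        rcases lt_or_eq_of_le (Finset.le_sup (f := Dfun) hiS) with hDi | hDi
        · calc pdegZ (u i * Kb i (piv istar)) + c
              ≤ pdegZ (u i) + sdeg s (Kb i) := by
                rw [hterm]
                exact add_le_add le_rfl hentry_le
            _ < D := hDi
        · have hiM : i ∈ M := Finset.mem_filter.2 ⟨hiS, hDi⟩
          have hile : i ≤ istar := Finset.le_max' M i hiM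
          have hilt : i < istar := lt_of_le_of_ne hile hine
          have hpivlt : piv i < piv istar := hmono hilt
          have hentry_ne := (hpiv i).2 (piv istar) hpivlt
          have hentry_lt : pdegZ (Kb i (piv istar)) + c < sdeg s (Kb i) :=
            lt_of_le_of_ne hentry_le hentry_ne
          have hub : pdegZ (u i) ≠ ⊥ := fun h => hui (pdegZ_eq_bot.1 h)
          calc pdegZ (u i * Kb i (piv istar)) + c
              = pdegZ (u i) + (pdegZ (Kb i (piv istar)) + c) := hterm
            _ < pdegZ (u i) + sdeg s (Kb i) := WithBot.add_lt_add_left hub hentry_lt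
            _ = Dfun i := rfl
            _ = D := hDi
      rw [← hDmainc] at hlt
      exact (WithBot.add_lt_add_iff_right hcne).1 hlt
  have hsum : ∑ i, u i * Kb i (piv istar) = 0 := by
    have := hu0 istar
    simpa [vecMul, dotProduct] using this
  have hmain_eq : u istar * a = -∑ i ∈ Finset.univ.erase istar, u i * Kb i (piv istar) := by
    have h2 := Finset.sum_erase_add Finset.univ (fun i => u i * Kb i (piv istar))
      (Finset.mem_univ istar)
    rw [hsum] at h2
    linear_combination h2
  have hcontra : pdegZ (u istar * a) < pdegZ (u istar * a) := by
    calc pdegZ (u istar * a)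
        = pdegZ (∑ i ∈ Finset.univ.erase istar, u i * Kb i (piv istar)) := by
          rw [hmain_eq, pdegZ_neg]
      _ ≤ (Finset.univ.erase istar).sup (fun i => pdegZ (u i * Kb i (piv istar))) :=
          pdegZ_sum_le _ _
      _ < pdegZ (u istar * a) := by
          rw [Finset.sup_lt_iff (Ne.bot_lt hDmainne)]
          exact hsmall
  exact lt_irrefl _ hcontra

/-- The non-pivot rows of a weak Popov kernel basis locate `r` independent rows of `F`. -/
theorem stmt8 {K : Type*} [Field K] {m n r : ℕ} (hr : r ≤ m)
    (F : Matrix (Fin m) (Fin n) K[X]) (hF : polyRank F = r)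
    (s : Fin m → ℤ) (Kb : Matrix (Fin (m - r)) (Fin m) K[X])
    (hkb : IsKernelBasis Kb F)
    (piv : Fin (m - r) → Fin m) (hmono : StrictMono piv)
    (hnz : ∀ i, Kb i ≠ 0) (hpiv : ∀ i, IsPivotIndex s (Kb i) (piv i)) :
    ((Finset.univ.image piv)ᶜ).card = r ∧
    polyRank (F.submatrix
      (fun i : {x // x ∈ (Finset.univ.image piv)ᶜ} => (i : Fin m)) id) = r := by
  classical
  set C : Finset (Fin m) := (Finset.univ.image piv)ᶜ with hC
  have hcard : C.card = r := by
    rw [hC, Finset.card_compl, Finset.card_image_of_injective _ hmono.injective,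
      Finset.card_univ, Fintype.card_fin, Fintype.card_fin, Nat.sub_sub_self hr]
  refine ⟨hcard, ?_⟩
  set alg := algebraMap K[X] (RatFunc K) with halgdef
  have halg : Function.Injective alg := IsFractionRing.injective K[X] (RatFunc K)
  set A : Matrix {x // x ∈ C} (Fin n) (RatFunc K) :=
    (F.submatrix (fun i : {x // x ∈ C} => (i : Fin m)) id).map alg with hA
  have hli : LinearIndependent (RatFunc K) A := by
    by_contra hdep
    replace hdep := Fintype.not_linearIndependent_iff.mp hdep
    obtain ⟨g, hgsum, i0, hgi0⟩ := hdep
    obtain ⟨b, hb⟩ :=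
      IsLocalization.exist_integer_multiples_of_finite (nonZeroDivisors K[X]) g
    have hb' : ∀ i, ∃ y : K[X], alg y = (b : K[X]) • g i := fun i => hb i
    choose q hq using hb'
    set p : Fin m → K[X] := fun j => if h : j ∈ C then q ⟨j, h⟩ else 0 with hp
    have hpC : ∀ i : {x // x ∈ C}, p (i : Fin m) = q i := by
      intro i
      rw [hp]
      simp only [i.2, dif_pos]
    have hcol : ∀ j, ∑ i : {x // x ∈ C}, g i * alg (F (i : Fin m) j) = 0 := by
      intro j
      have h1 := congrFun hgsum j
      rw [Finset.sum_apply] at h1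
      simpa [hA, Pi.smul_apply, smul_eq_mul, Matrix.map_apply,
        Matrix.submatrix_apply] using h1
    have hpF : p ᵥ* F = 0 := by
      funext j
      apply halg
      rw [Pi.zero_apply, map_zero]
      have hPj : (p ᵥ* F) j = ∑ i, p i * F i j := by
        simp [vecMul, dotProduct]
      rw [hPj, map_sum]
      simp only [_root_.map_mul]
      have hvan : ∀ i ∈ Finset.univ, i ∉ C → alg (p i) * alg (F i j) = 0 := by
        intro i _ hiC
        rw [hp]
        simp [dif_neg hiC]
      rw [← Finset.sum_subset (Finset.subset_univ C) hvan]
      rw [← Finset.sum_attach C (fun i => alg (p i) * alg (F i j))]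
      have hterm : ∀ x : {i // i ∈ C}, alg (p (x : Fin m)) * alg (F (x : Fin m) j)
          = alg (b : K[X]) * (g x * alg (F (x : Fin m) j)) := by
        intro x
        rw [hpC x, hq x, Algebra.smul_def, mul_assoc]
      calc ∑ x ∈ C.attach, alg (p (x : Fin m)) * alg (F (x : Fin m) j)
          = ∑ x ∈ C.attach, alg (b : K[X]) * (g x * alg (F (x : Fin m) j)) :=
            Finset.sum_congr rfl (fun x _ => hterm x)
        _ = alg (b : K[X]) * ∑ x ∈ C.attach, g x * alg (F (x : Fin m) j) := by
            rw [Finset.mul_sum]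
        _ = alg (b : K[X]) * ∑ x : {i // i ∈ C}, g x * alg (F (x : Fin m) j) := by
            rw [Finset.univ_eq_attach]
        _ = 0 := by rw [hcol j, mul_zero]
    obtain ⟨u, hu⟩ := hkb.2.2 p hpF
    have hu0 : ∀ i, (u ᵥ* Kb) (piv i) = 0 := by
      intro i
      rw [← hu, hp]
      have hpivnC : piv i ∉ C := by
        rw [hC, Finset.mem_compl, not_not]
        exact Finset.mem_image_of_mem piv (Finset.mem_univ i)
      simp [dif_neg hpivnC]
    have huz : u = 0 := vecMul_pivot_zero s Kb piv hmono hnz hpiv u hu0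
    have hpz : p = 0 := by rw [hu, huz, Matrix.zero_vecMul]
    have hq0 : q i0 = 0 := by
      rw [← hpC i0, hpz]
      rfl
    have : alg (b : K[X]) * g i0 = 0 := by
      rw [← Algebra.smul_def, ← hq i0, hq0, map_zero]
    rcases mul_eq_zero.1 this with h | h
    · have : (b : K[X]) = 0 := halg (by rw [h, map_zero])
      exact nonZeroDivisors.coe_ne_zero b this
    · exact hgi0 h
  have hrank : A.rank = r := by
    rw [LinearIndependent.rank_matrix (M := A) hli, Fintype.card_coe, hcard]
  exact hrank

end
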